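/- For any K ⊆ 𝒫(T): (i) K is finitely consistent if and only if E(W) = {D ∈ 𝔻 : W ⊆ sds(D)} is nonempty for every finite W ⊆ K; (ii) cl_fin(K) = ⋃_{W finite, W ⊆ K} ⋂_{D ∈ 𝔻 with W ⊆ sds(D)} sds(D); (iii) K is a finitely coherent SDS if and only if K is finitely consistent and K = ⋃_{W finite, W ⊆ K} ⋂_{D ∈ 𝔻 with W ⊆ sds(D)} sds(D). -/
import Mathlib


universe u

variable {T : Type u}

/-- `cl` is a closure operator on subsets of `T`. -/
def IsClosure (cl : Set T → Set T) : Prop :=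
  (∀ A : Set T, A ⊆ cl A) ∧
  (∀ A B : Set T, A ⊆ B → cl A ⊆ cl B) ∧
  (∀ A : Set T, cl (cl A) = cl A)

/-- `cl` is finitary: the closure of a set is the union of the closures of its
finite subsets. -/
def IsFinitary (cl : Set T → Set T) : Prop :=
  ∀ A : Set T, cl A = ⋃ F ∈ {F : Set T | F.Finite ∧ F ⊆ A}, cl F

/-- A coherent set of desirable things (SDT): closed and avoiding the forbidden
things `Tneg`. -/
def CohSDT (cl : Set T → Set T) (Tneg : Set T) (D : Set T) : Prop :=
  cl D = D ∧ D ∩ Tneg = ∅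

/-- Selection maps of a collection `W` of sets of things: maps choosing an
element of each member of `W`. -/
def Sel (W : Set (Set T)) : Type u :=
  {σ : Set T → T // ∀ A ∈ W, σ A ∈ A}

/-- A coherent set of desirable sets of things (SDS): axioms K1–K5. -/
def CohSDS (cl : Set T → Set T) (Tneg : Set T) (K : Set (Set T)) : Prop :=
  (∅ : Set T) ∉ K ∧
  (∀ A₁ ∈ K, ∀ A₂ : Set T, A₁ ⊆ A₂ → A₂ ∈ K) ∧
  (∀ A ∈ K, A \ Tneg ∈ K) ∧
  (∀ t ∈ cl (∅ : Set T), ({t} : Set T) ∈ K) ∧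
  (∀ W ⊆ K, W.Nonempty →
    ∀ f : Sel W → T, (∀ σ : Sel W, f σ ∈ cl (σ.1 '' W)) → Set.range f ∈ K)

/-- A finitely coherent SDS: axioms K1–K4 together with K5 restricted to
nonempty finite subcollections. -/
def FinCohSDS (cl : Set T → Set T) (Tneg : Set T) (K : Set (Set T)) : Prop :=
  (∅ : Set T) ∉ K ∧
  (∀ A₁ ∈ K, ∀ A₂ : Set T, A₁ ⊆ A₂ → A₂ ∈ K) ∧
  (∀ A ∈ K, A \ Tneg ∈ K) ∧
  (∀ t ∈ cl (∅ : Set T), ({t} : Set T) ∈ K) ∧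
  (∀ W ⊆ K, W.Finite → W.Nonempty →
    ∀ f : Sel W → T, (∀ σ : Sel W, f σ ∈ cl (σ.1 '' W)) → Set.range f ∈ K)

/-- A finitely coherent set of desirable finite sets of things (SDFS):
axioms F1–F5. -/
def FinCohSDFS (cl : Set T → Set T) (Tneg : Set T) (K : Set (Set T)) : Prop :=
  (∀ F ∈ K, F.Finite) ∧
  (∅ : Set T) ∉ K ∧
  (∀ F₁ ∈ K, ∀ F₂ : Set T, F₂.Finite → F₁ ⊆ F₂ → F₂ ∈ K) ∧
  (∀ F ∈ K, F \ Tneg ∈ K) ∧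
  (∀ t ∈ cl (∅ : Set T), ({t} : Set T) ∈ K) ∧
  (∀ W ⊆ K, W.Finite → W.Nonempty →
    ∀ f : Sel W → T, (∀ σ : Sel W, f σ ∈ cl (σ.1 '' W)) → Set.range f ∈ K)

/-- The set of things whose singletons belong to `K`. -/
def sdt (K : Set (Set T)) : Set T := {t | ({t} : Set T) ∈ K}

/-- The SDS of all sets of things meeting `D`. -/
def sds (D : Set T) : Set (Set T) := {A | (A ∩ D).Nonempty}

/-- The SDFS of all finite sets of things meeting `D`. -/
def sdfs (D : Set T) : Set (Set T) := {F | F.Finite ∧ (F ∩ D).Nonempty}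

/-- The event `𝒟_A` of all coherent SDTs meeting `A`. -/
def evA (cl : Set T → Set T) (Tneg : Set T) (A : Set T) : Set (Set T) :=
  {D | CohSDT cl Tneg D ∧ (A ∩ D).Nonempty}

/-- The event `E(W)` of all coherent SDTs meeting every member of `W`
(with `E(∅)` equal to the set of all coherent SDTs). -/
def ev (cl : Set T → Set T) (Tneg : Set T) (W : Set (Set T)) : Set (Set T) :=
  {D | CohSDT cl Tneg D ∧ ∀ A ∈ W, (A ∩ D).Nonempty}

/-- An SDS is conjunctive if every desirable set contains a desirable
singleton. -/
def Conjunctive (K : Set (Set T)) : Prop :=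
  ∀ A ∈ K, ∃ t ∈ A, ({t} : Set T) ∈ K

/-- Completeness of an SDS. -/
def CompleteSDS (K : Set (Set T)) : Prop :=
  ∀ A₁ A₂ : Set T, A₁ ∪ A₂ ∈ K → A₁ ∈ K ∨ A₂ ∈ K

/-- The finitary part `K^f` of an SDS. -/
def finPart (K : Set (Set T)) : Set (Set T) :=
  {A | ∃ B ∈ K, B.Finite ∧ B ⊆ A}

/-- An SDS is finitary if every desirable set has a finite desirable subset. -/
def FinitarySDS (K : Set (Set T)) : Prop :=
  ∀ A ∈ K, ∃ B, B.Finite ∧ B ⊆ A ∧ B ∈ K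

/-- The lattice of events `E`. -/
def Ecal (cl : Set T → Set T) (Tneg : Set T) : Set (Set (Set T)) :=
  {E | ∃ W : Set (Set T), E = ev cl Tneg W}

/-- The lattice of finitary events `E_fin`. -/
def Efin (cl : Set T → Set T) (Tneg : Set T) : Set (Set (Set T)) :=
  {E | ∃ W : Set (Set T), W.Finite ∧ E = ev cl Tneg W}

/-- A filter on a lattice of events `L` ordered by inclusion. -/
def IsFilterOn (L F : Set (Set (Set T))) : Prop :=
  F ⊆ L ∧ F.Nonempty ∧
  (∀ E₁ ∈ F, ∀ E₂ ∈ L, E₁ ⊆ E₂ → E₂ ∈ F) ∧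
  (∀ E₁ ∈ F, ∀ E₂ ∈ F, E₁ ∩ E₂ ∈ F)

/-- A proper filter on `L`. -/
def IsProperFilterOn (L F : Set (Set (Set T))) : Prop :=
  IsFilterOn L F ∧ F ≠ L

/-- A prime filter on `L`. -/
def IsPrimeFilterOn (L F : Set (Set (Set T))) : Prop :=
  IsProperFilterOn L F ∧
  ∀ E₁ ∈ L, ∀ E₂ ∈ L, E₁ ∪ E₂ ∈ F → E₁ ∈ F ∨ E₂ ∈ F

/-- A proper principal filter on `L`: the upset of some nonempty `E₀ ∈ L`. -/
def IsProperPrincipalFilterOn (L F : Set (Set (Set T))) : Prop :=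
  ∃ E₀ ∈ L, E₀ ≠ (∅ : Set (Set T)) ∧ F = {E' | E' ∈ L ∧ E₀ ⊆ E'}

/-- The map `f̂` sending an SDS to the collection of events of its finite
subcollections. -/
def fhat (cl : Set T → Set T) (Tneg : Set T) (K : Set (Set T)) :
    Set (Set (Set T)) :=
  {E | ∃ W : Set (Set T), W ⊆ K ∧ W.Finite ∧ E = ev cl Tneg W}

/-- The map `f` sending an SDS to the collection of events of all of its
subcollections. -/
def fprin (cl : Set T → Set T) (Tneg : Set T) (K : Set (Set T)) :
    Set (Set (Set T)) :=
  {E | ∃ W : Set (Set T), W ⊆ K ∧ E = ev cl Tneg W}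

/-- The map `d` sending a collection of events to the SDS it determines. -/
def dmap (cl : Set T → Set T) (Tneg : Set T) (F : Set (Set (Set T))) :
    Set (Set T) :=
  {A : Set T | evA cl Tneg A ∈ F}

/-- `K` is finitely consistent: it is included in some finitely coherent SDS. -/
def FinConsistent (cl : Set T → Set T) (Tneg : Set T) (K : Set (Set T)) : Prop :=
  ∃ K' : Set (Set T), FinCohSDS cl Tneg K' ∧ K ⊆ K'

/-- `K` is consistent: it is included in some coherent SDS. -/
def Consistent (cl : Set T → Set T) (Tneg : Set T) (K : Set (Set T)) : Prop :=
  ∃ K' : Set (Set T), CohSDS cl Tneg K' ∧ K ⊆ K'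

/-- The finitary closure operator on SDSes (with value `𝒫(T)` when `K` is not
finitely consistent, via the empty-intersection convention). -/
def clFin (cl : Set T → Set T) (Tneg : Set T) (K : Set (Set T)) : Set (Set T) :=
  ⋂₀ {K' : Set (Set T) | FinCohSDS cl Tneg K' ∧ K ⊆ K'}

/-- The closure operator on SDSes (with value `𝒫(T)` when `K` is not
consistent, via the empty-intersection convention). -/
def clSDS (cl : Set T → Set T) (Tneg : Set T) (K : Set (Set T)) : Set (Set T) :=
  ⋂₀ {K' : Set (Set T) | CohSDS cl Tneg K' ∧ K ⊆ K'}

namespace ConjRepAux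

variable {T : Type u} [Nonempty T] {cl : Set T → Set T} {Tneg : Set T}

lemma mem_reprK {K : Set (Set T)} {A : Set T} :
    A ∈ (⋃ W ∈ {W : Set (Set T) | W.Finite ∧ W ⊆ K},
        ⋂ D ∈ {D : Set T | CohSDT cl Tneg D ∧ W ⊆ sds D}, sds D) ↔
    ∃ W : Set (Set T), (W.Finite ∧ W ⊆ K) ∧
      ∀ D : Set T, CohSDT cl Tneg D → W ⊆ sds D → A ∈ sds D := by
  simp [Set.mem_iUnion, Set.mem_iInter]

/-- Separation: from a finitely coherent SDS `K'`, a finite `W ⊆ K'`, and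
`A ∉ K'`, produce a coherent SDT meeting all of `W` but avoiding `A`. -/
lemma sep_lemma (hcl : IsClosure cl) (hsan : cl (∅ : Set T) ∩ Tneg = ∅)
    {K' : Set (Set T)} (hK' : FinCohSDS cl Tneg K')
    {W : Set (Set T)} (hWK : W ⊆ K') (hWfin : W.Finite)
    {A : Set T} (hA : A ∉ K') :
    ∃ D, CohSDT cl Tneg D ∧ W ⊆ sds D ∧ A ∩ D = ∅ := by
  obtain ⟨h1, h2, h3, h4, h5⟩ := hK'
  obtain ⟨hext, hmono, hidem⟩ := hcl
  rcases W.eq_empty_or_nonempty with rfl | hWne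
  · refine ⟨cl ∅, ⟨hidem _, hsan⟩, by simp, ?_⟩
    by_contra h
    obtain ⟨t, htA, htc⟩ := Set.nonempty_iff_ne_empty.2 h
    exact hA (h2 _ (h4 t htc) A (by simpa using htA))
  · set W' : Set (Set T) := (fun B => B \ Tneg) '' W with hW'def
    have hW'K : W' ⊆ K' := by rintro _ ⟨B, hB, rfl⟩; exact h3 B (hWK hB)
    have hW'fin : W'.Finite := hWfin.image _
    have hW'ne : W'.Nonempty := hWne.image _
    have key : ∃ σ : Sel W', cl (σ.1 '' W') ∩ (A ∪ Tneg) = ∅ := by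
      by_contra h
      push_neg at h
      choose f hf using h
      have hrange : Set.range f ∈ K' :=
        h5 W' hW'K hW'fin hW'ne f (fun σ => (hf σ).1)
      have hsub : Set.range f \ Tneg ⊆ A := by
        rintro t ⟨⟨σ, rfl⟩, htn⟩
        rcases (hf σ).2 with h | h
        · exact h
        · exact absurd h htn
      exact hA (h2 _ (h3 _ hrange) A hsub)
    obtain ⟨σ, hσ⟩ := key
    refine ⟨cl (σ.1 '' W'), ⟨hidem _, ?_⟩, ?_, ?_⟩
    · apply Set.eq_empty_of_subset_empty
      rw [← hσ]; exact Set.inter_subset_inter_right _ Set.subset_union_right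
    · intro B hB
      have hmem : B \ Tneg ∈ W' := ⟨B, hB, rfl⟩
      have ht := σ.2 _ hmem
      exact ⟨σ.1 (B \ Tneg), ht.1, hext _ ⟨B \ Tneg, hmem, rfl⟩⟩
    · apply Set.eq_empty_of_subset_empty
      rw [← hσ]
      rw [Set.inter_comm]
      exact Set.inter_subset_inter_right _ Set.subset_union_left

/-- When every finite subcollection of `K` admits a compatible coherent SDT,
the conjunctive representation of `K` is a finitely coherent SDS. -/
lemma repr_fincoh (hcl : IsClosure cl) (hsan : cl (∅ : Set T) ∩ Tneg = ∅)
    {K : Set (Set T)}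
    (hcons : ∀ W ⊆ K, W.Finite →
      {D : Set T | CohSDT cl Tneg D ∧ W ⊆ sds D}.Nonempty) :
    FinCohSDS cl Tneg (⋃ W ∈ {W : Set (Set T) | W.Finite ∧ W ⊆ K},
        ⋂ D ∈ {D : Set T | CohSDT cl Tneg D ∧ W ⊆ sds D}, sds D) := by
  obtain ⟨hext, hmono, hidem⟩ := hcl
  refine ⟨?_, ?_, ?_, ?_, ?_⟩
  · intro h
    obtain ⟨W, ⟨hWfin, hWK⟩, hW⟩ := mem_reprK.1 h
    obtain ⟨D, hD, hDW⟩ := hcons W hWK hWfin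
    obtain ⟨t, ht, -⟩ := hW D hD hDW
    exact ht
  · intro A₁ hA₁ A₂ hsub
    obtain ⟨W, hWp, hW⟩ := mem_reprK.1 hA₁
    refine mem_reprK.2 ⟨W, hWp, fun D hD hDW => ?_⟩
    obtain ⟨t, ht1, ht2⟩ := hW D hD hDW
    exact ⟨t, hsub ht1, ht2⟩
  · intro A hA
    obtain ⟨W, hWp, hW⟩ := mem_reprK.1 hA
    refine mem_reprK.2 ⟨W, hWp, fun D hD hDW => ?_⟩
    obtain ⟨t, ht1, ht2⟩ := hW D hD hDW
    have htn : t ∉ Tneg := fun h =>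
      Set.eq_empty_iff_forall_notMem.1 hD.2 t ⟨ht2, h⟩
    exact ⟨t, ⟨ht1, htn⟩, ht2⟩
  · intro t ht
    refine mem_reprK.2 ⟨∅, ⟨Set.finite_empty, Set.empty_subset _⟩,
      fun D hD _ => ?_⟩
    have : cl ∅ ⊆ D := by
      rw [← hD.1]; exact hmono _ _ (Set.empty_subset D)
    exact ⟨t, rfl, this ht⟩
  · intro V hVR hVfin hVne f hf
    have hch : ∀ A : Set T, ∃ W : Set (Set T), (W.Finite ∧ W ⊆ K) ∧
        (A ∈ V → ∀ D : Set T, CohSDT cl Tneg D → W ⊆ sds D →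
          (A ∩ D).Nonempty) := by
      intro A
      by_cases hA : A ∈ V
      · obtain ⟨W, hWp, hW⟩ := mem_reprK.1 (hVR hA)
        exact ⟨W, hWp, fun _ => hW⟩
      · exact ⟨∅, ⟨Set.finite_empty, Set.empty_subset _⟩,
          fun h => absurd h hA⟩
    choose g hg1 hg2 using hch
    refine mem_reprK.2 ⟨⋃ A ∈ V, g A,
      ⟨hVfin.biUnion (fun A _ => (hg1 A).1), ?_⟩, ?_⟩
    · intro B hB
      obtain ⟨A, -, hBA⟩ := Set.mem_iUnion₂.1 hB
      exact (hg1 A).2 hBA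
    · intro D hD hDW
      have hAD : ∀ A ∈ V, (A ∩ D).Nonempty := by
        intro A hA
        exact hg2 A hA D hD (fun B hB => hDW (Set.mem_iUnion₂.2 ⟨A, hA, hB⟩))
      classical
      set σ₀ : Set T → T := fun A =>
        if h : (A ∩ D).Nonempty then h.choose else Classical.arbitrary T
        with hσ₀def
      have hσ₀ : ∀ A ∈ V, σ₀ A ∈ A ∩ D := by
        intro A hA
        simp only [hσ₀def, dif_pos (hAD A hA)]
        exact (hAD A hA).choose_spec
      have hsel : ∀ A ∈ V, σ₀ A ∈ A := fun A hA => (hσ₀ A hA).1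
      set σ : Sel V := ⟨σ₀, hsel⟩ with hσdef
      have himg : σ₀ '' V ⊆ D := by
        rintro _ ⟨A, hA, rfl⟩; exact (hσ₀ A hA).2
      have hfin : f σ ∈ D := by
        have := hf σ
        have hsub : cl (σ.1 '' V) ⊆ D := by
          rw [← hD.1]; exact hmono _ _ himg
        exact hsub this
      exact ⟨f σ, ⟨σ, rfl⟩, hfin⟩

/-- The representation is contained in every finitely coherent SDS
containing `K`. -/
lemma repr_subset (hcl : IsClosure cl) (hsan : cl (∅ : Set T) ∩ Tneg = ∅)
    {K K' : Set (Set T)} (hK' : FinCohSDS cl Tneg K') (hKK' : K ⊆ K') :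
    (⋃ W ∈ {W : Set (Set T) | W.Finite ∧ W ⊆ K},
        ⋂ D ∈ {D : Set T | CohSDT cl Tneg D ∧ W ⊆ sds D}, sds D) ⊆ K' := by
  intro A hA
  obtain ⟨W, ⟨hWfin, hWK⟩, hW⟩ := mem_reprK.1 hA
  by_contra hA'
  obtain ⟨D, hD, hDW, hDA⟩ :=
    sep_lemma hcl hsan hK' (hWK.trans hKK') hWfin hA'
  obtain ⟨t, ht1, ht2⟩ := hW D hD hDW
  exact Set.eq_empty_iff_forall_notMem.1 hDA t ⟨ht1, ht2⟩

/-- `K` is always contained in its representation. -/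
lemma subset_repr {K : Set (Set T)} :
    K ⊆ ⋃ W ∈ {W : Set (Set T) | W.Finite ∧ W ⊆ K},
        ⋂ D ∈ {D : Set T | CohSDT cl Tneg D ∧ W ⊆ sds D}, sds D := by
  intro A hA
  refine mem_reprK.2 ⟨{A}, ⟨Set.finite_singleton A, by simpa using hA⟩,
    fun D hD hDW => hDW rfl⟩

end ConjRepAux

/-- Conjunctive representation of finite consistency, the finitary closure
operator, and finite coherence. -/
theorem conjunctive_representation_finitary (T : Type u) [Nonempty T]
    (cl : Set T → Set T) (Tneg : Set T)
    (hcl : IsClosure cl) (hsan : cl (∅ : Set T) ∩ Tneg = ∅)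
    (K : Set (Set T)) :
    (FinConsistent cl Tneg K ↔
      ∀ W ⊆ K, W.Finite →
        {D : Set T | CohSDT cl Tneg D ∧ W ⊆ sds D}.Nonempty) ∧
    (clFin cl Tneg K =
      ⋃ W ∈ {W : Set (Set T) | W.Finite ∧ W ⊆ K},
        ⋂ D ∈ {D : Set T | CohSDT cl Tneg D ∧ W ⊆ sds D}, sds D) ∧
    (FinCohSDS cl Tneg K ↔
      (FinConsistent cl Tneg K ∧
        K = ⋃ W ∈ {W : Set (Set T) | W.Finite ∧ W ⊆ K},
          ⋂ D ∈ {D : Set T | CohSDT cl Tneg D ∧ W ⊆ sds D}, sds D)) := by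
    classical
  have hi : FinConsistent cl Tneg K ↔
      ∀ W ⊆ K, W.Finite →
        {D : Set T | CohSDT cl Tneg D ∧ W ⊆ sds D}.Nonempty := by
    constructor
    · rintro ⟨K', hK', hKK'⟩ W hWK hWfin
      obtain ⟨D, hD, hDW, -⟩ :=
        ConjRepAux.sep_lemma hcl hsan hK' (hWK.trans hKK') hWfin hK'.1
      exact ⟨D, hD, hDW⟩
    · intro h
      exact ⟨_, ConjRepAux.repr_fincoh hcl hsan h, ConjRepAux.subset_repr⟩
  have hii : clFin cl Tneg K =
      ⋃ W ∈ {W : Set (Set T) | W.Finite ∧ W ⊆ K},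
        ⋂ D ∈ {D : Set T | CohSDT cl Tneg D ∧ W ⊆ sds D}, sds D := by
    apply Set.Subset.antisymm
    · by_cases hc : FinConsistent cl Tneg K
      · intro A hA
        exact Set.mem_sInter.1 hA _
          ⟨ConjRepAux.repr_fincoh hcl hsan (hi.1 hc), ConjRepAux.subset_repr⟩
      · intro A _
        rw [hi] at hc
        push_neg at hc
        obtain ⟨W, hWK, hWfin, hWe⟩ := hc
        exact ConjRepAux.mem_reprK.2 ⟨W, ⟨hWfin, hWK⟩, fun D hD hDW =>
          (Set.eq_empty_iff_forall_notMem.1 hWe D ⟨hD, hDW⟩).elim⟩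
    · intro A hA
      rw [clFin, Set.mem_sInter]
      rintro K' ⟨h1, h2⟩
      exact ConjRepAux.repr_subset hcl hsan h1 h2 hA
  refine ⟨hi, hii, ?_, ?_⟩
  · intro hK
    refine ⟨⟨K, hK, subset_rfl⟩, Set.Subset.antisymm ConjRepAux.subset_repr
      (ConjRepAux.repr_subset hcl hsan hK subset_rfl)⟩
  · rintro ⟨hc, hKR⟩
    have h := ConjRepAux.repr_fincoh hcl hsan (hi.1 hc)
    rwa [← hKR] at h
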